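/- For a micro tree with a single child micro tree in the Farzan–Munro decomposition of a binary tree, the split rank (the number of closing parentheses in the left chunk plus one) equals the portal rank (the inorder position, among the micro tree's nodes and possible attachment positions, of the leaf slot where the child micro tree's root attaches). -/

import Mathlib

/-- A binary tree: `leaf` is the empty tree; each internal node has an
optional left and an optional right subtree (possibly `leaf`). -/
inductive BinTree : Type where
  | leaf : BinTree
  | node : BinTree → BinTree → BinTree
deriving DecidableEq

namespace BinTree

/-- Number of nodes of a binary tree. -/
def size : BinTree → ℕ
  | leaf => 0
  | node l r => l.size + r.size + 1

/-- BalancedBP-parenthesis encoding of binary trees: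
`BP(empty) = ε`, `BP(t) = '(' ++ BP(t_l) ++ ')' ++ BP(t_r)`.
`true` is an opening parenthesis, `false` a closing one. -/
def bp : BinTree → List Bool
  | leaf => []
  | node l r => true :: (l.bp ++ false :: r.bp)

/-- The subtree reached by following a path (`false` = left, `true` = right). -/
def subtreeAt : BinTree → List Bool → Option BinTree
  | t, [] => some t
  | leaf, _ :: _ => none
  | node l _, false :: p => subtreeAt l p
  | node _ r, true :: p => subtreeAt r p

/-- A path identifies an actual node of the tree (not an empty slot). -/
def ValidPath (t : BinTree) (p : List Bool) : Prop :=
  ∃ l r, subtreeAt t p = some (node l r)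

/-- Index (0-based) of the opening parenthesis of the node at a path. -/
def openIdx : BinTree → List Bool → Option ℕ
  | leaf, _ => none
  | node _ _, [] => some 0
  | node l _, false :: p => (openIdx l p).map (· + 1)
  | node l r, true :: p => (openIdx r p).map (· + (l.bp.length + 2))

/-- Index (0-based) of the closing parenthesis of the node at a path. -/
def closeIdx : BinTree → List Bool → Option ℕ
  | leaf, _ => none
  | node l _, [] => some (l.bp.length + 1)
  | node l _, false :: p => (closeIdx l p).map (· + 1)
  | node l r, true :: p => (closeIdx r p).map (· + (l.bp.length + 2))

/-- Inorder rank (0-based) of the node at a path. -/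
def inorderIdx : BinTree → List Bool → Option ℕ
  | leaf, _ => none
  | node l _, [] => some l.size
  | node l _, false :: p => inorderIdx l p
  | node l r, true :: p => (inorderIdx r p).map (· + (l.size + 1))

theorem bp_length (t : BinTree) : t.bp.length = 2 * t.size := by
  induction t with
  | leaf => simp [bp, size]
  | node l r ihl ihr => simp [bp, size, ihl, ihr]; omega

theorem valid_bounds : ∀ (t : BinTree) (p : List Bool), ValidPath t p →
    ∃ o c, openIdx t p = some o ∧ closeIdx t p = some c ∧ o < c ∧ c < t.bp.length := by
  intro t
  induction t with
  | leaf => rintro p ⟨l, r, h⟩; cases p <;> simp [subtreeAt] at h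
  | node l r ihl ihr =>
    intro p hp
    match p with
    | [] =>
      refine ⟨0, l.bp.length + 1, rfl, rfl, by omega, ?_⟩
      simp only [bp, List.length_cons, List.length_append]; omega
    | false :: p' =>
      obtain ⟨o, c, ho, hc, hoc, hlt⟩ := ihl p' hp
      refine ⟨o + 1, c + 1, ?_, ?_, by omega, ?_⟩
      · simp [openIdx, ho]
      · simp [closeIdx, hc]
      · simp only [bp, List.length_cons, List.length_append]; omega
    | true :: p' =>
      obtain ⟨o, c, ho, hc, hoc, hlt⟩ := ihr p' hp
      refine ⟨o + (l.bp.length + 2), c + (l.bp.length + 2), ?_, ?_, by omega, ?_⟩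
      · simp [openIdx, ho]
      · simp [closeIdx, hc]
      · simp only [bp, List.length_cons, List.length_append]; omega

theorem inorder_bounds : ∀ (t : BinTree) (p : List Bool), ValidPath t p →
    ∃ i, inorderIdx t p = some i ∧ i < t.size := by
  intro t
  induction t with
  | leaf => rintro p ⟨l, r, h⟩; cases p <;> simp [subtreeAt] at h
  | node l r ihl ihr =>
    intro p hp
    match p with
    | [] => exact ⟨l.size, rfl, by simp [size]⟩
    | false :: p' =>
      obtain ⟨i, hi, hlt⟩ := ihl p' hp
      exact ⟨i, hi, by simp [size]; omega⟩
    | true :: p' =>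
      obtain ⟨i, hi, hlt⟩ := ihr p' hp
      exact ⟨i + (l.size + 1), by simp [inorderIdx, hi], by simp [size]; omega⟩

theorem subtreeAt_append : ∀ (p : List Bool) (t : BinTree) (s : List Bool),
    subtreeAt t (p ++ s) = (subtreeAt t p).bind (fun u => subtreeAt u s) := by
  intro p
  induction p with
  | nil => intro t s; simp [subtreeAt]
  | cons bh p' ih =>
    intro t s
    match t, bh with
    | leaf, _ => simp [subtreeAt]
    | node l r, false => simpa [subtreeAt] using ih l s
    | node l r, true => simpa [subtreeAt] using ih r s

theorem prefix_valid {t : BinTree} {p s : List Bool} (h : ValidPath t (p ++ s)) :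
    ValidPath t p := by
  obtain ⟨L, R, h⟩ := h
  rw [subtreeAt_append] at h
  obtain ⟨u, hu, hus⟩ := Option.bind_eq_some_iff.mp h
  match u, s with
  | u, [] => simp [subtreeAt] at hus; exact ⟨L, R, by rwa [hus] at hu⟩
  | leaf, _ :: _ => simp [subtreeAt] at hus
  | node l r, _ :: _ => exact ⟨l, r, hu⟩

theorem map_add_add (o : Option ℕ) (m n : ℕ) :
    (o.map (· + m)).map (· + n) = o.map (· + (m + n)) := by
  cases o <;> simp [Nat.add_assoc]

theorem shift : ∀ (p : List Bool) (t u : BinTree), subtreeAt t p = some u →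
    ∃ off, (∀ s, openIdx t (p ++ s) = (openIdx u s).map (· + off)) ∧
           (∀ s, closeIdx t (p ++ s) = (closeIdx u s).map (· + off)) := by
  intro p
  induction p with
  | nil =>
    intro t u h
    simp [subtreeAt] at h
    subst h
    exact ⟨0, fun s => by simp, fun s => by simp⟩
  | cons bh p' ih =>
    intro t u h
    match t, bh with
    | leaf, _ => simp [subtreeAt] at h
    | node l r, false =>
      obtain ⟨off, ho, hc⟩ := ih l u h
      refine ⟨off + 1, fun s => ?_, fun s => ?_⟩
      · show (openIdx l (p' ++ s)).map (· + 1) = _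
        rw [ho s, map_add_add]
      · show (closeIdx l (p' ++ s)).map (· + 1) = _
        rw [hc s, map_add_add]
    | node l r, true =>
      obtain ⟨off, ho, hc⟩ := ih r u h
      refine ⟨off + (l.bp.length + 2), fun s => ?_, fun s => ?_⟩
      · show (openIdx r (p' ++ s)).map (· + (l.bp.length + 2)) = _
        rw [ho s, map_add_add]
      · show (closeIdx r (p' ++ s)).map (· + (l.bp.length + 2)) = _
        rw [hc s, map_add_add]

theorem surj : ∀ (u : BinTree) (k : ℕ), k < u.bp.length →
    ∃ s, ValidPath u s ∧ (openIdx u s = some k ∨ closeIdx u s = some k) := by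
  intro u
  induction u with
  | leaf => intro k hk; simp [bp] at hk
  | node l r ihl ihr =>
    intro k hk
    have hlen : (node l r).bp.length = l.bp.length + r.bp.length + 2 := by simp [bp]; omega
    rcases Nat.eq_zero_or_pos k with h0 | hpos
    · exact ⟨[], ⟨l, r, rfl⟩, Or.inl (by simp [openIdx, h0])⟩
    · by_cases h1 : k ≤ l.bp.length
      · obtain ⟨s, hv, hoc⟩ := ihl (k - 1) (by omega)
        refine ⟨false :: s, hv, ?_⟩
        rcases hoc with ho | hc
        · exact Or.inl (by simp [openIdx, ho]; omega)
        · exact Or.inr (by simp [closeIdx, hc]; omega)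
      · by_cases h2 : k = l.bp.length + 1
        · exact ⟨[], ⟨l, r, rfl⟩, Or.inr (by simp [closeIdx, h2])⟩
        · obtain ⟨s, hv, hoc⟩ := ihr (k - (l.bp.length + 2)) (by omega)
          refine ⟨true :: s, hv, ?_⟩
          rcases hoc with ho | hc
          · exact Or.inl (by simp [openIdx, ho]; omega)
          · exact Or.inr (by simp [closeIdx, hc]; omega)

theorem close_lt_iff : ∀ (t : BinTree) (p p' : List Bool), ValidPath t p → ValidPath t p' →
    ∀ {i i' c c' : ℕ}, inorderIdx t p = some i → inorderIdx t p' = some i' →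
    closeIdx t p = some c → closeIdx t p' = some c' → (i < i' ↔ c < c') := by
  intro t
  induction t with
  | leaf => rintro p p' ⟨l, r, h⟩; cases p <;> simp [subtreeAt] at h
  | node l r ihl ihr =>
    intro p p' hp hp' i i' c c' hi hi' hc hc'
    have hl2 : l.bp.length = 2 * l.size := bp_length l
    match p, p' with
    | [], [] =>
      simp [inorderIdx, closeIdx] at hi hi' hc hc'
      omega
    | [], false :: s' =>
      obtain ⟨i2, hi2, hib⟩ := inorder_bounds l s' hp'
      obtain ⟨o2, c2, _, hc2, _, hcb⟩ := valid_bounds l s' hp'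
      simp [inorderIdx, closeIdx] at hi hc
      have : inorderIdx l s' = some i' := hi'
      rw [this] at hi2
      have hcc : closeIdx (node l r) (false :: s') = (closeIdx l s').map (· + 1) := rfl
      rw [hcc, hc2] at hc'
      simp at hc' hi2
      omega
    | [], true :: s' =>
      obtain ⟨i2, hi2, hib⟩ := inorder_bounds r s' hp'
      obtain ⟨o2, c2, _, hc2, _, hcb⟩ := valid_bounds r s' hp'
      simp [inorderIdx, closeIdx] at hi hc
      have h1 : inorderIdx (node l r) (true :: s') = (inorderIdx r s').map (· + (l.size + 1)) := rfl
      have h2 : closeIdx (node l r) (true :: s') = (closeIdx r s').map (· + (l.bp.length + 2)) := rfl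
      rw [h1, hi2] at hi'
      rw [h2, hc2] at hc'
      simp at hi' hc'
      omega
    | false :: s, [] =>
      obtain ⟨i2, hi2, hib⟩ := inorder_bounds l s hp
      obtain ⟨o2, c2, _, hc2, _, hcb⟩ := valid_bounds l s hp
      simp [inorderIdx, closeIdx] at hi' hc'
      have h1 : inorderIdx l s = some i := hi
      have h2 : closeIdx (node l r) (false :: s) = (closeIdx l s).map (· + 1) := rfl
      rw [h1] at hi2
      rw [h2, hc2] at hc
      simp at hc hi2
      omega
    | true :: s, [] =>
      obtain ⟨i2, hi2, hib⟩ := inorder_bounds r s hp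
      obtain ⟨o2, c2, _, hc2, _, hcb⟩ := valid_bounds r s hp
      simp [inorderIdx, closeIdx] at hi' hc'
      have h1 : inorderIdx (node l r) (true :: s) = (inorderIdx r s).map (· + (l.size + 1)) := rfl
      have h2 : closeIdx (node l r) (true :: s) = (closeIdx r s).map (· + (l.bp.length + 2)) := rfl
      rw [h1, hi2] at hi
      rw [h2, hc2] at hc
      simp at hi hc
      omega
    | false :: s, false :: s' =>
      obtain ⟨c2, hc2, hcb⟩ : ∃ x, closeIdx l s = some x ∧ c = x + 1 := by
        have h2 : closeIdx (node l r) (false :: s) = (closeIdx l s).map (· + 1) := rfl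
        rw [h2] at hc
        rcases Option.map_eq_some_iff.mp hc with ⟨x, hx, he⟩
        exact ⟨x, hx, he.symm⟩
      obtain ⟨c3, hc3, hcb'⟩ : ∃ x, closeIdx l s' = some x ∧ c' = x + 1 := by
        have h2 : closeIdx (node l r) (false :: s') = (closeIdx l s').map (· + 1) := rfl
        rw [h2] at hc'
        rcases Option.map_eq_some_iff.mp hc' with ⟨x, hx, he⟩
        exact ⟨x, hx, he.symm⟩
      have key := ihl s s' hp hp' hi hi' hc2 hc3
      rw [key]; omega
    | false :: s, true :: s' =>
      obtain ⟨i2, hi2, hib⟩ := inorder_bounds l s hp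
      obtain ⟨o2, c2, _, hc2, _, hcb⟩ := valid_bounds l s hp
      obtain ⟨i3, hi3, hib'⟩ := inorder_bounds r s' hp'
      obtain ⟨o3, c3, _, hc3, _, hcb'⟩ := valid_bounds r s' hp'
      have h1 : inorderIdx l s = some i := hi
      have h2 : closeIdx (node l r) (false :: s) = (closeIdx l s).map (· + 1) := rfl
      have h3 : inorderIdx (node l r) (true :: s') = (inorderIdx r s').map (· + (l.size + 1)) := rfl
      have h4 : closeIdx (node l r) (true :: s') = (closeIdx r s').map (· + (l.bp.length + 2)) := rfl
      rw [h1] at hi2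
      rw [h2, hc2] at hc
      rw [h3, hi3] at hi'
      rw [h4, hc3] at hc'
      simp at hc hi' hc' hi2
      omega
    | true :: s, false :: s' =>
      obtain ⟨i2, hi2, hib⟩ := inorder_bounds r s hp
      obtain ⟨o2, c2, _, hc2, _, hcb⟩ := valid_bounds r s hp
      obtain ⟨i3, hi3, hib'⟩ := inorder_bounds l s' hp'
      obtain ⟨o3, c3, _, hc3, _, hcb'⟩ := valid_bounds l s' hp'
      have h1 : inorderIdx (node l r) (true :: s) = (inorderIdx r s).map (· + (l.size + 1)) := rfl
      have h2 : closeIdx (node l r) (true :: s) = (closeIdx r s).map (· + (l.bp.length + 2)) := rfl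
      have h3 : inorderIdx l s' = some i' := hi'
      have h4 : closeIdx (node l r) (false :: s') = (closeIdx l s').map (· + 1) := rfl
      rw [h1, hi2] at hi
      rw [h2, hc2] at hc
      rw [h3] at hi3
      rw [h4, hc3] at hc'
      simp at hi hc hc' hi3
      omega
    | true :: s, true :: s' =>
      obtain ⟨i2, hi2⟩ : ∃ x, inorderIdx r s = some x ∧ i = x + (l.size + 1) := by
        have h1 : inorderIdx (node l r) (true :: s) = (inorderIdx r s).map (· + (l.size + 1)) := rfl
        rw [h1] at hi
        rcases Option.map_eq_some_iff.mp hi with ⟨x, hx, he⟩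
        exact ⟨x, hx, he.symm⟩
      obtain ⟨i3, hi3⟩ : ∃ x, inorderIdx r s' = some x ∧ i' = x + (l.size + 1) := by
        have h1 : inorderIdx (node l r) (true :: s') = (inorderIdx r s').map (· + (l.size + 1)) := rfl
        rw [h1] at hi'
        rcases Option.map_eq_some_iff.mp hi' with ⟨x, hx, he⟩
        exact ⟨x, hx, he.symm⟩
      obtain ⟨c2, hc2⟩ : ∃ x, closeIdx r s = some x ∧ c = x + (l.bp.length + 2) := by
        have h2 : closeIdx (node l r) (true :: s) = (closeIdx r s).map (· + (l.bp.length + 2)) := rfl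
        rw [h2] at hc
        rcases Option.map_eq_some_iff.mp hc with ⟨x, hx, he⟩
        exact ⟨x, hx, he.symm⟩
      obtain ⟨c3, hc3⟩ : ∃ x, closeIdx r s' = some x ∧ c' = x + (l.bp.length + 2) := by
        have h2 : closeIdx (node l r) (true :: s') = (closeIdx r s').map (· + (l.bp.length + 2)) := rfl
        rw [h2] at hc'
        rcases Option.map_eq_some_iff.mp hc' with ⟨x, hx, he⟩
        exact ⟨x, hx, he.symm⟩
      have key := ihr s s' hp hp' hi2.1 hi3.1 hc2.1 hc3.1
      obtain ⟨_, rfl⟩ := hi2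
      obtain ⟨_, rfl⟩ := hi3
      obtain ⟨_, rfl⟩ := hc2
      obtain ⟨_, rfl⟩ := hc3
      rw [Nat.add_lt_add_iff_right, Nat.add_lt_add_iff_right]
      exact key

theorem inorder_inj : ∀ (t : BinTree) (p p' : List Bool), ValidPath t p → ValidPath t p' →
    ∀ {i : ℕ}, inorderIdx t p = some i → inorderIdx t p' = some i → p = p' := by
  intro t
  induction t with
  | leaf => rintro p p' ⟨l, r, h⟩; cases p <;> simp [subtreeAt] at h
  | node l r ihl ihr =>
    intro p p' hp hp' i hi hi'
    match p, p' with
    | [], [] => rfl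
    | [], false :: s' =>
      obtain ⟨i2, hi2, hib⟩ := inorder_bounds l s' hp'
      have h1 : inorderIdx l s' = some i := hi'
      have h0 : inorderIdx (node l r) ([] : List Bool) = some l.size := rfl
      rw [h0] at hi
      rw [h1] at hi2
      simp at hi hi2
      omega
    | [], true :: s' =>
      obtain ⟨i2, hi2, _⟩ := inorder_bounds r s' hp'
      have h1 : inorderIdx (node l r) (true :: s') = (inorderIdx r s').map (· + (l.size + 1)) := rfl
      have h0 : inorderIdx (node l r) ([] : List Bool) = some l.size := rfl
      rw [h0] at hi
      rw [h1, hi2] at hi'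
      simp at hi hi'
      omega
    | false :: s, [] =>
      obtain ⟨i2, hi2, hib⟩ := inorder_bounds l s hp
      have h1 : inorderIdx l s = some i := hi
      have h0 : inorderIdx (node l r) ([] : List Bool) = some l.size := rfl
      rw [h0] at hi'
      rw [h1] at hi2
      simp at hi' hi2
      omega
    | true :: s, [] =>
      obtain ⟨i2, hi2, _⟩ := inorder_bounds r s hp
      have h1 : inorderIdx (node l r) (true :: s) = (inorderIdx r s).map (· + (l.size + 1)) := rfl
      have h0 : inorderIdx (node l r) ([] : List Bool) = some l.size := rfl
      rw [h0] at hi'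
      rw [h1, hi2] at hi
      simp at hi' hi
      omega
    | false :: s, false :: s' =>
      have := ihl s s' hp hp' hi hi'
      rw [this]
    | false :: s, true :: s' =>
      obtain ⟨i2, hi2, hib⟩ := inorder_bounds l s hp
      obtain ⟨i3, hi3, _⟩ := inorder_bounds r s' hp'
      have h1 : inorderIdx l s = some i := hi
      have h3 : inorderIdx (node l r) (true :: s') = (inorderIdx r s').map (· + (l.size + 1)) := rfl
      rw [h1] at hi2
      rw [h3, hi3] at hi'
      simp at hi2 hi'
      omega
    | true :: s, false :: s' =>
      obtain ⟨i2, hi2, _⟩ := inorder_bounds r s hp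
      obtain ⟨i3, hi3, hib⟩ := inorder_bounds l s' hp'
      have h1 : inorderIdx (node l r) (true :: s) = (inorderIdx r s).map (· + (l.size + 1)) := rfl
      have h3 : inorderIdx l s' = some i := hi'
      rw [h1, hi2] at hi
      rw [h3] at hi3
      simp at hi hi3
      omega
    | true :: s, true :: s' =>
      have h1 : inorderIdx (node l r) (true :: s) = (inorderIdx r s).map (· + (l.size + 1)) := rfl
      have h2 : inorderIdx (node l r) (true :: s') = (inorderIdx r s').map (· + (l.size + 1)) := rfl
      rw [h1] at hi; rw [h2] at hi'
      rcases Option.map_eq_some_iff.mp hi with ⟨x, hx, he⟩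
      rcases Option.map_eq_some_iff.mp hi' with ⟨x', hx', he'⟩
      have : x = x' := by omega
      subst this
      rw [ihr s s' hp hp' hx hx']

theorem pos_inj : ∀ (t : BinTree) (p p' : List Bool), ValidPath t p → ValidPath t p' →
    ∀ {k : ℕ}, (openIdx t p = some k ∨ closeIdx t p = some k) →
    (openIdx t p' = some k ∨ closeIdx t p' = some k) → p = p' := by
  intro t
  induction t with
  | leaf => rintro p p' ⟨l, r, h⟩; cases p <;> simp [subtreeAt] at h
  | node l r ihl ihr =>
    intro p p' hp hp' k hk hk'
    have root0 : openIdx (node l r) ([] : List Bool) = some 0 := rfl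
    have rootc : closeIdx (node l r) ([] : List Bool) = some (l.bp.length + 1) := rfl
    have extract : ∀ (u : BinTree) (s : List Bool), ValidPath u s →
        ∀ {j : ℕ}, (openIdx u s = some j ∨ closeIdx u s = some j) → j < u.bp.length := by
      intro u s hu j hj
      obtain ⟨o, c, ho, hc, hoc, hcb⟩ := valid_bounds u s hu
      rcases hj with h | h
      · rw [ho] at h; simp at h; omega
      · rw [hc] at h; simp at h; omega
    have getf : ∀ (u : BinTree) (s : List Bool) (j : ℕ),
        (openIdx (node l r) (false :: s) = some j ∨ closeIdx (node l r) (false :: s) = some j) →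
        ∃ j', j = j' + 1 ∧ (openIdx l s = some j' ∨ closeIdx l s = some j') := by
      intro u s j hj
      rcases hj with h | h
      · have he : openIdx (node l r) (false :: s) = (openIdx l s).map (· + 1) := rfl
        rw [he] at h
        rcases Option.map_eq_some_iff.mp h with ⟨x, hx, hxe⟩
        exact ⟨x, hxe.symm, Or.inl hx⟩
      · have he : closeIdx (node l r) (false :: s) = (closeIdx l s).map (· + 1) := rfl
        rw [he] at h
        rcases Option.map_eq_some_iff.mp h with ⟨x, hx, hxe⟩
        exact ⟨x, hxe.symm, Or.inr hx⟩
    have gett : ∀ (u : BinTree) (s : List Bool) (j : ℕ),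
        (openIdx (node l r) (true :: s) = some j ∨ closeIdx (node l r) (true :: s) = some j) →
        ∃ j', j = j' + (l.bp.length + 2) ∧ (openIdx r s = some j' ∨ closeIdx r s = some j') := by
      intro u s j hj
      rcases hj with h | h
      · have he : openIdx (node l r) (true :: s) = (openIdx r s).map (· + (l.bp.length + 2)) := rfl
        rw [he] at h
        rcases Option.map_eq_some_iff.mp h with ⟨x, hx, hxe⟩
        exact ⟨x, hxe.symm, Or.inl hx⟩
      · have he : closeIdx (node l r) (true :: s) = (closeIdx r s).map (· + (l.bp.length + 2)) := rfl
        rw [he] at h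
        rcases Option.map_eq_some_iff.mp h with ⟨x, hx, hxe⟩
        exact ⟨x, hxe.symm, Or.inr hx⟩
    match p, p' with
    | [], [] => rfl
    | [], false :: s' =>
      obtain ⟨j', hje, hj'⟩ := getf leaf s' k hk'
      have hb := extract l s' hp' hj'
      rcases hk with h | h
      · rw [root0] at h; simp at h; omega
      · rw [rootc] at h; simp at h; omega
    | [], true :: s' =>
      obtain ⟨j', hje, hj'⟩ := gett leaf s' k hk'
      rcases hk with h | h
      · rw [root0] at h; simp at h; omega
      · rw [rootc] at h; simp at h; omega
    | false :: s, [] =>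
      obtain ⟨j', hje, hj'⟩ := getf leaf s k hk
      have hb := extract l s hp hj'
      rcases hk' with h | h
      · rw [root0] at h; simp at h; omega
      · rw [rootc] at h; simp at h; omega
    | true :: s, [] =>
      obtain ⟨j', hje, hj'⟩ := gett leaf s k hk
      rcases hk' with h | h
      · rw [root0] at h; simp at h; omega
      · rw [rootc] at h; simp at h; omega
    | false :: s, false :: s' =>
      obtain ⟨j1, hje1, hj1⟩ := getf leaf s k hk
      obtain ⟨j2, hje2, hj2⟩ := getf leaf s' k hk'
      have : j1 = j2 := by omega
      subst this
      rw [ihl s s' hp hp' hj1 hj2]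
    | false :: s, true :: s' =>
      obtain ⟨j1, hje1, hj1⟩ := getf leaf s k hk
      obtain ⟨j2, hje2, hj2⟩ := gett leaf s' k hk'
      have hb := extract l s hp hj1
      omega
    | true :: s, false :: s' =>
      obtain ⟨j1, hje1, hj1⟩ := gett leaf s k hk
      obtain ⟨j2, hje2, hj2⟩ := getf leaf s' k hk'
      have hb := extract l s' hp' hj2
      omega
    | true :: s, true :: s' =>
      obtain ⟨j1, hje1, hj1⟩ := gett leaf s k hk
      obtain ⟨j2, hje2, hj2⟩ := gett leaf s' k hk'
      have : j1 = j2 := by omega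
      subst this
      rw [ihr s s' hp hp' hj1 hj2]


end BinTree

/-- A sequence of parentheses (`true` = '(') is balanced: equally many opening
and closing parentheses, and every prefix has at least as many opening ones. -/
def BalancedBP (s : List Bool) : Prop :=
  s.count true = s.count false ∧
  ∀ k, (s.take k).count false ≤ (s.take k).count true

/-- `excess s k`: number of opening minus closing parentheses among the first `k` symbols. -/
def excess (s : List Bool) (k : ℕ) : ℤ :=
  ((s.take k).count true : ℤ) - ((s.take k).count false : ℤ)

/-- `IsMatch s i j`: positions `i < j` form a matching pair of parentheses
(the standard stack-based matching). -/
def IsMatch (s : List Bool) (i j : ℕ) : Prop :=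
  i < j ∧ j < s.length ∧ s[i]? = some true ∧ s[j]? = some false ∧
  excess s (j + 1) = excess s i ∧
  ∀ k, i < k → k ≤ j → excess s i < excess s k

/-- `EnclosePair s i v j`: `j` is the closing parenthesis whose matching pair
tightly encloses the matching pair `(i, v)`. -/
def EnclosePair (s : List Bool) (i v j : ℕ) : Prop :=
  (∃ i', IsMatch s i' j ∧ i' < i ∧ v < j) ∧
  ∀ i'' j'', IsMatch s i'' j'' → i'' < i → v < j'' → j ≤ j''

/-- Longest common prefix of two paths. -/
def lcp : List Bool → List Bool → List Bool
  | a :: as, b :: bs => if a = b then a :: lcp as bs else []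
  | _, _ => []

/-- `M` is a micro tree of `t`: a nonempty, connected set of nodes of `t`
closed between its root and each of its members. -/
def IsMicroTree (t : BinTree) (M : Set (List Bool)) : Prop :=
  M.Nonempty ∧ (∀ p ∈ M, BinTree.ValidPath t p) ∧
  ∃ r ∈ M, ∀ p ∈ M, r <+: p ∧ ∀ q, r <+: q → q <+: p → BinTree.ValidPath t q → q ∈ M

/-- Outgoing edges of `M` towards children: nodes of `t` outside `M` whose parent is in `M`. -/
def childEdges (t : BinTree) (M : Set (List Bool)) : Set (List Bool) :=
  {q | q ∉ M ∧ BinTree.ValidPath t q ∧ ∃ p ∈ M, ∃ b, q = p ++ [b]}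

/-- The set of BP positions (opening and closing parentheses) of the nodes of `M`. -/
def bpPositions (t : BinTree) (M : Set (List Bool)) : Set ℕ :=
  {k | ∃ p ∈ M, BinTree.openIdx t p = some k ∨ BinTree.closeIdx t p = some k}

/-- for a micro tree with a single child micro tree, the split
rank (number of closing parentheses in the left chunk, plus one) equals the
portal rank (the 1-based inorder rank of the attached child root within the
micro tree extended by that root). -/
theorem splitRank_eq_portalRank (t : BinTree) (M : Set (List Bool))
    (hM : IsMicroTree t M)
    (q : List Bool) (hq : childEdges t M = {q})
    (a b c d : ℕ)
    (hpos : bpPositions t M = Set.Ico a b ∪ Set.Ico c d)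
    (hab : a < b) (hbc : b ≤ c) (hcd : c ≤ d)
    (hcanon : b < c ∨ c = d)
    (iq : ℕ) (hiq : BinTree.inorderIdx t q = some iq) :
    {p ∈ M | ∃ k, BinTree.closeIdx t p = some k ∧ a ≤ k ∧ k < b}.ncard + 1 =
      {p ∈ M | ∃ ip, BinTree.inorderIdx t p = some ip ∧ ip < iq}.ncard + 1 := by
  obtain ⟨hne, hvalid, rM, hrM, hroot⟩ := hM
  have hqE : q ∈ childEdges t M := by rw [hq]; exact Set.mem_singleton q
  obtain ⟨hqM, hqv, p₀, hp₀, b₀, hqe⟩ := hqE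
  have hmem : ∀ k : ℕ, (∃ m ∈ M, BinTree.openIdx t m = some k ∨ BinTree.closeIdx t m = some k)
      ↔ (k ∈ Set.Ico a b ∨ k ∈ Set.Ico c d) := by
    intro k
    have h := Set.ext_iff.mp hpos k
    simpa [bpPositions, Set.mem_union] using h
  obtain ⟨oq', cq, hoq', hcq, hocq, _⟩ := BinTree.valid_bounds t q hqv
  -- shift at p₀
  have hp₀v := hvalid p₀ hp₀
  obtain ⟨l₀, r₀, hsub₀⟩ := hp₀v
  obtain ⟨off₀, ho₀, hc₀⟩ := BinTree.shift p₀ t _ hsub₀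
  have hopenp₀ : BinTree.openIdx t p₀ = some off₀ := by
    have h := ho₀ []
    simpa [BinTree.openIdx] using h
  have hqvrel : BinTree.ValidPath (BinTree.node l₀ r₀) [b₀] := by
    obtain ⟨L, R, hLR⟩ := hqv
    refine ⟨L, R, ?_⟩
    rw [hqe, BinTree.subtreeAt_append, hsub₀] at hLR
    exact hLR
  obtain ⟨o1, rc, _, hrc, horc, _⟩ := BinTree.valid_bounds _ [b₀] hqvrel
  have hcqe : cq = rc + off₀ := by
    have h := hc₀ [b₀]
    rw [← hqe, hcq, hrc] at h
    simpa using h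
  -- shift at q
  obtain ⟨Lq, Rq, hsubq⟩ := hqv
  obtain ⟨offq, hoq, hcq2⟩ := BinTree.shift q t _ hsubq
  have blockq : ∀ x k, BinTree.ValidPath t x → q <+: x →
      (BinTree.openIdx t x = some k ∨ BinTree.closeIdx t x = some k) →
      offq ≤ k ∧ k < offq + (BinTree.node Lq Rq).bp.length := by
    intro x k hxv hpre hx
    obtain ⟨s, rfl⟩ := hpre
    have hxvrel : BinTree.ValidPath (BinTree.node Lq Rq) s := by
      obtain ⟨L, R, hLR⟩ := hxv
      rw [BinTree.subtreeAt_append, hsubq] at hLR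
      exact ⟨L, R, hLR⟩
    obtain ⟨o2, c2, ho2, hc2, h12, h22⟩ := BinTree.valid_bounds _ s hxvrel
    rcases hx with h | h
    · rw [hoq s, ho2] at h; simp at h; omega
    · rw [hcq2 s, hc2] at h; simp at h; omega
  have blockq_surj : ∀ k, offq ≤ k → k < offq + (BinTree.node Lq Rq).bp.length →
      ∃ x, BinTree.ValidPath t x ∧ q <+: x ∧
        (BinTree.openIdx t x = some k ∨ BinTree.closeIdx t x = some k) := by
    intro k h1 h2
    obtain ⟨s, hsv, hoc⟩ := BinTree.surj (BinTree.node Lq Rq) (k - offq) (by omega)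
    refine ⟨q ++ s, ?_, List.prefix_append _ _, ?_⟩
    · obtain ⟨L, R, hLR⟩ := hsv
      exact ⟨L, R, by rw [BinTree.subtreeAt_append, hsubq]; exact hLR⟩
    · rcases hoc with h | h
      · left; rw [hoq s, h]; simp; omega
      · right; rw [hcq2 s, h]; simp; omega
  -- shift at rM
  have hrMv := hvalid rM hrM
  obtain ⟨LM, RM, hsubM⟩ := hrMv
  obtain ⟨offM, hoM, hcM⟩ := BinTree.shift rM t _ hsubM
  have blockM : ∀ x k, BinTree.ValidPath t x → rM <+: x →
      (BinTree.openIdx t x = some k ∨ BinTree.closeIdx t x = some k) →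
      offM ≤ k ∧ k < offM + (BinTree.node LM RM).bp.length := by
    intro x k hxv hpre hx
    obtain ⟨s, rfl⟩ := hpre
    have hxvrel : BinTree.ValidPath (BinTree.node LM RM) s := by
      obtain ⟨L, R, hLR⟩ := hxv
      rw [BinTree.subtreeAt_append, hsubM] at hLR
      exact ⟨L, R, hLR⟩
    obtain ⟨o2, c2, ho2, hc2, h12, h22⟩ := BinTree.valid_bounds _ s hxvrel
    rcases hx with h | h
    · rw [hoM s, ho2] at h; simp at h; omega
    · rw [hcM s, hc2] at h; simp at h; omega
  have blockM_surj : ∀ k, offM ≤ k → k < offM + (BinTree.node LM RM).bp.length →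
      ∃ x, BinTree.ValidPath t x ∧ rM <+: x ∧
        (BinTree.openIdx t x = some k ∨ BinTree.closeIdx t x = some k) := by
    intro k h1 h2
    obtain ⟨s, hsv, hoc⟩ := BinTree.surj (BinTree.node LM RM) (k - offM) (by omega)
    refine ⟨rM ++ s, ?_, List.prefix_append _ _, ?_⟩
    · obtain ⟨L, R, hLR⟩ := hsv
      exact ⟨L, R, by rw [BinTree.subtreeAt_append, hsubM]; exact hLR⟩
    · rcases hoc with h | h
      · left; rw [hoM s, h]; simp; omega
      · right; rw [hcM s, h]; simp; omega
  have hqvalid : BinTree.ValidPath t q := ⟨Lq, Rq, hsubq⟩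
  have hp₀q : p₀ <+: q := by rw [hqe]; exact List.prefix_append _ _
  have hrMq : rM <+: q := (hroot p₀ hp₀).1.trans hp₀q
  -- q is not a prefix of any member of M
  have hqnp : ∀ m ∈ M, ¬ q <+: m := by
    intro m hm hpre
    exact hqM ((hroot m hm).2 q hrMq hpre hqvalid)
  -- x valid, extends rM, not in M → q prefix of x
  have key : ∀ x, BinTree.ValidPath t x → rM <+: x → x ∉ M → q <+: x := by
    intro x
    induction x using List.reverseRecOn with
    | nil =>
      intro hv hpre hnm
      have h0 : rM = [] := List.prefix_nil.mp hpre
      exact absurd (h0 ▸ hrM) hnm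
    | append_singleton y bl ih =>
      intro hv hpre hnm
      by_cases hy : rM = y ++ [bl]
      · exact absurd (hy ▸ hrM) hnm
      · have hpre' : rM <+: y := by
          obtain ⟨s, hs⟩ := hpre
          rcases s.eq_nil_or_concat with rfl | ⟨s', a2, rfl⟩
          · exact absurd (by simpa using hs) hy
          · have h2 : (rM ++ s') ++ [a2] = y ++ [bl] := by
              simpa [List.append_assoc, List.concat_eq_append] using hs
            have hlen : (rM ++ s').length = y.length := by
              have h4 := congrArg List.length h2
              simp at h4 ⊢
              omega
            obtain ⟨h3, _⟩ := List.append_inj h2 hlen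
            exact ⟨s', h3⟩
        have hyv : BinTree.ValidPath t y := BinTree.prefix_valid hv
        by_cases hyM : y ∈ M
        · have hce : y ++ [bl] ∈ childEdges t M := ⟨hnm, hv, y, hyM, bl, rfl⟩
          rw [hq] at hce
          rw [hce]
        · exact (ih hyv hpre' hyM).trans (List.prefix_append y [bl])
  -- cq is not a position of M
  have hcq_not : ¬ (cq ∈ Set.Ico a b ∨ cq ∈ Set.Ico c d) := by
    intro h
    obtain ⟨m, hm, hmoc⟩ := (hmem cq).mpr h
    have hmq : m = q := BinTree.pos_inj t m q (hvalid m hm) hqvalid hmoc (Or.inr hcq)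
    exact hqM (hmq ▸ hm)
  have ha₀ : a ≤ off₀ := by
    rcases (hmem off₀).mp ⟨p₀, hp₀, Or.inl hopenp₀⟩ with h | h <;>
      rw [Set.mem_Ico] at h <;> omega
  have hbcq : b ≤ cq := by
    by_contra hlt
    push_neg at hlt
    exact hcq_not (Or.inl (by rw [Set.mem_Ico]; omega))
  have hcq_blk := blockq q cq hqvalid List.prefix_rfl (Or.inr hcq)
  have hcqc : c < d → cq < c := by
    intro hcd'
    by_contra hge
    push_neg at hge
    have hdcq : d ≤ cq := by
      by_contra h
      push_neg at h
      exact hcq_not (Or.inr (by rw [Set.mem_Ico]; omega))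
    have posM : ∀ k : ℕ, (∃ m ∈ M, BinTree.openIdx t m = some k ∨ BinTree.closeIdx t m = some k) →
        offM ≤ k ∧ k < offM + (BinTree.node LM RM).bp.length := by
      rintro k ⟨m, hm, hmoc⟩
      exact blockM m k (hvalid m hm) (hroot m hm).1 hmoc
    have h1 := posM a ((hmem a).mpr (Or.inl (by rw [Set.mem_Ico]; omega)))
    have h2 := posM (d - 1) ((hmem (d - 1)).mpr (Or.inr (by rw [Set.mem_Ico]; omega)))
    obtain ⟨x, hxv, hxpre, hxoc⟩ := blockM_surj b (by omega) (by omega)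
    have hbc' : b < c := hcanon.resolve_right (by omega)
    have hbnot : ¬ (b ∈ Set.Ico a b ∨ b ∈ Set.Ico c d) := by
      rw [Set.mem_Ico, Set.mem_Ico]; omega
    have hxnM : x ∉ M := fun hxM => hbnot ((hmem b).mp ⟨x, hxM, hxoc⟩)
    have hqx : q <+: x := key x hxv hxpre hxnM
    have hb_blk := blockq x b hxv hqx hxoc
    obtain ⟨y, hyv, hyq, hyoc⟩ := blockq_surj c (by omega) (by omega)
    obtain ⟨mc, hmc, hmcoc⟩ := (hmem c).mpr (Or.inr (by rw [Set.mem_Ico]; omega))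
    have hymc : y = mc := BinTree.pos_inj t y mc hyv (hvalid mc hmc) hyoc hmcoc
    exact hqnp mc hmc (hymc ▸ hyq)
  have hSeq : {p ∈ M | ∃ k, BinTree.closeIdx t p = some k ∧ a ≤ k ∧ k < b} =
      {p ∈ M | ∃ ip, BinTree.inorderIdx t p = some ip ∧ ip < iq} := by
    ext p
    simp only [Set.mem_setOf_eq]
    constructor
    · rintro ⟨hpM, k, hk, hak, hkb⟩
      refine ⟨hpM, ?_⟩
      have hpv := hvalid p hpM
      obtain ⟨ip, hip, _⟩ := BinTree.inorder_bounds t p hpv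
      refine ⟨ip, hip, ?_⟩
      have hiff := BinTree.close_lt_iff t p q hpv hqvalid hip hiq hk hcq
      rw [hiff]
      omega
    · rintro ⟨hpM, ip, hip, hlt⟩
      have hpv := hvalid p hpM
      obtain ⟨o2, k, _, hk, _, _⟩ := BinTree.valid_bounds t p hpv
      have hiff := BinTree.close_lt_iff t p q hpv hqvalid hip hiq hk hcq
      have hkcq : k < cq := hiff.mp hlt
      have hkU := (hmem k).mp ⟨p, hpM, Or.inr hk⟩
      refine ⟨hpM, k, hk, ?_, ?_⟩
      · rcases hkU with h | h <;> rw [Set.mem_Ico] at h <;> omega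
      · rcases hkU with h | h
        · rw [Set.mem_Ico] at h; omega
        · rw [Set.mem_Ico] at h
          have hcd' : c < d := by omega
          have := hcqc hcd'
          omega
  rw [hSeq]
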